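/- Let L* be a lattice of rank 2 in ℝ² with automorphism group R ⊂ O(2) (orthogonal maps preserving L*). Suppose τ ∈ R with τ ≠ 1 fixes a primitive vector l1* of L*. Then either (a) there exists l2* ∈ L* with l1* · l2* = 0 such that (l1*, l2*) is a ℤ-basis of L*, or (b) τ² = 1 and there exists l2* ∈ L* such that l1* = l2* + τ(l2*) and (l2*, τ(l2*)) is a ℤ-basis of L*. -/

import Mathlib

set_option maxHeartbeats 1000000


open RealInnerProductSpace

/-- If an automorphism `τ ≠ 1` of a rank-2 lattice `L*` in `ℝ²` fixes a primitive vector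
`l1*`, then either (a) there is `l2* ∈ L*` orthogonal to `l1*` with `(l1*, l2*)` a `ℤ`-basis
of `L*`, or (b) `τ² = 1` and there is `l2* ∈ L*` with `l1* = l2* + τ l2*` and
`(l2*, τ l2*)` a `ℤ`-basis of `L*`. -/
theorem fixed_primitive_vector_dichotomy
    (L : Submodule ℤ (EuclideanSpace ℝ (Fin 2)))
    [DiscreteTopology L] [IsZLattice ℝ L]
    (τ : EuclideanSpace ℝ (Fin 2) ≃ₗᵢ[ℝ] EuclideanSpace ℝ (Fin 2))
    (hτL : ∀ x : EuclideanSpace ℝ (Fin 2), x ∈ L ↔ τ x ∈ L)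
    (hτne : τ ≠ LinearIsometryEquiv.refl ℝ (EuclideanSpace ℝ (Fin 2)))
    (l1 : EuclideanSpace ℝ (Fin 2)) (hl1 : l1 ∈ L)
    (hprim : ∃ b : Module.Basis (Fin 2) ℤ L, ((b 0 : L) : EuclideanSpace ℝ (Fin 2)) = l1)
    (hfix : τ l1 = l1) :
    (∃ l2 ∈ L, ⟪l1, l2⟫ = (0 : ℝ) ∧
      ∃ b : Module.Basis (Fin 2) ℤ L,
        ((b 0 : L) : EuclideanSpace ℝ (Fin 2)) = l1 ∧
        ((b 1 : L) : EuclideanSpace ℝ (Fin 2)) = l2) ∨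
    (τ.trans τ = LinearIsometryEquiv.refl ℝ (EuclideanSpace ℝ (Fin 2)) ∧
      ∃ l2 ∈ L, l1 = l2 + τ l2 ∧
      ∃ b : Module.Basis (Fin 2) ℤ L,
        ((b 0 : L) : EuclideanSpace ℝ (Fin 2)) = l2 ∧
        ((b 1 : L) : EuclideanSpace ℝ (Fin 2)) = τ l2) := by
  obtain ⟨b, hb0⟩ := hprim
  set v : EuclideanSpace ℝ (Fin 2) := (b 1 : EuclideanSpace ℝ (Fin 2)) with hv_def
  have hv : v ∈ L := (b 1).2
  have hτv : τ v ∈ L := (hτL v).mp hv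
  have hτv' : τ.symm v ∈ L := (hτL (τ.symm v)).mpr (by simpa using hv)
  set w : L := ⟨τ v, hτv⟩ with hw_def
  set w' : L := ⟨τ.symm v, hτv'⟩ with hw'_def
  set a : ℤ := b.repr w 0 with ha_def
  set c : ℤ := b.repr w 1 with hc_def
  set a' : ℤ := b.repr w' 0 with ha'_def
  set c' : ℤ := b.repr w' 1 with hc'_def
  have hw : a • b 0 + c • b 1 = w := by
    have := b.sum_repr w; rw [Fin.sum_univ_two] at this; exact this
  have hw' : a' • b 0 + c' • b 1 = w' := by
    have := b.sum_repr w'; rw [Fin.sum_univ_two] at this; exact this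
  have hτvE : τ v = (a : ℝ) • l1 + (c : ℝ) • v := by
    have := congrArg (Submodule.subtype L) hw
    simp only [map_add, map_smul, Submodule.coe_subtype] at this
    rw [show τ v = (w : EuclideanSpace ℝ (Fin 2)) from rfl, ← this, hb0, ← hv_def]
    simp [Int.cast_smul_eq_zsmul]
  have hτv'E : τ.symm v = (a' : ℝ) • l1 + (c' : ℝ) • v := by
    have := congrArg (Submodule.subtype L) hw'
    simp only [map_add, map_smul, Submodule.coe_subtype] at this
    rw [show τ.symm v = (w' : EuclideanSpace ℝ (Fin 2)) from rfl, ← this, hb0, ← hv_def]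
    simp [Int.cast_smul_eq_zsmul]
  -- the key coordinate relation
  have hreal : (((a' + c' * a) : ℤ) : ℝ) • l1 + (((c' * c) : ℤ) : ℝ) • v = v := by
    have h0 : τ (τ.symm v) = v := by simp
    rw [hτv'E, map_add, map_smul, map_smul, hfix, hτvE] at h0
    calc (((a' + c' * a) : ℤ) : ℝ) • l1 + (((c' * c) : ℤ) : ℝ) • v
        = (a' : ℝ) • l1 + (c' : ℝ) • ((a : ℝ) • l1 + (c : ℝ) • v) := by push_cast; module
      _ = v := h0
  have hLrel : ((a' + c' * a) • b 0 + (c' * c) • b 1 : L) = b 1 := by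
    apply Subtype.ext
    simp only [Submodule.coe_add, Submodule.coe_smul, hb0, ← hv_def]
    rw [← Int.cast_smul_eq_zsmul ℝ, ← Int.cast_smul_eq_zsmul ℝ]
    exact hreal
  have hcc : c' * c = 1 := by
    have h1 := congrArg (fun x : L => b.repr x 1) hLrel
    simpa [Finsupp.single_apply] using h1
  have hl1ne : l1 ≠ 0 := by
    rw [← hb0]
    exact fun h => b.ne_zero 0 (by exact_mod_cast h)
  have hn1 : ⟪l1, l1⟫ ≠ (0:ℝ) := inner_self_ne_zero.mpr hl1ne
  -- a general extensionality principle
  have hbasisext : ∀ (σ : EuclideanSpace ℝ (Fin 2) ≃ₗᵢ[ℝ] EuclideanSpace ℝ (Fin 2)),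
      σ l1 = l1 → σ v = v → σ = LinearIsometryEquiv.refl ℝ (EuclideanSpace ℝ (Fin 2)) := by
    intro σ h1 h2
    set e := b.ofZLatticeBasis ℝ L with he_def
    have hσ : (σ.toLinearEquiv : EuclideanSpace ℝ (Fin 2) →ₗ[ℝ] EuclideanSpace ℝ (Fin 2))
        = LinearMap.id := by
      apply e.ext
      intro i
      fin_cases i <;>
        simp [he_def, Module.Basis.ofZLatticeBasis_apply, hb0, ← hv_def, h1, h2]
    exact LinearIsometryEquiv.ext fun x => by
      simpa using LinearMap.congr_fun hσ x
  rcases Int.isUnit_iff.mp (IsUnit.of_mul_eq_one (a := c) c' (by linarith [hcc])) with hc1 | hc1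
  · -- c = 1 : contradiction
    exfalso
    have hp := τ.inner_map_map l1 v
    rw [hfix, hτvE, hc1] at hp
    simp only [Int.cast_one, one_smul, inner_add_right, real_inner_smul_right] at hp
    have ha0 : (a : ℝ) = 0 := by
      have hz : (a : ℝ) * ⟪l1, l1⟫ = 0 := by linarith
      rcases mul_eq_zero.mp hz with h | h
      · exact h
      · exact absurd h hn1
    have hτvv : τ v = v := by rw [hτvE, hc1, ha0]; simp
    exact hτne (hbasisext τ hfix hτvv)
  · -- c = -1
    have hτvE' : τ v = (a : ℝ) • l1 - v := by rw [hτvE, hc1]; push_cast; module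
    have hτ2 : τ.trans τ = LinearIsometryEquiv.refl ℝ (EuclideanSpace ℝ (Fin 2)) := by
      apply hbasisext
      · simp [hfix]
      · show τ (τ v) = v
        rw [hτvE', map_sub, map_smul, hfix, hτvE']
        module
    have mkBasis : ∀ (f g : Fin 2 → L),
        (b.constr ℤ f).comp (b.constr ℤ g) = LinearMap.id →
        (b.constr ℤ g).comp (b.constr ℤ f) = LinearMap.id →
        ∃ b' : Module.Basis (Fin 2) ℤ L, b' 0 = f 0 ∧ b' 1 = f 1 := by
      intro f g hfg hgf
      refine ⟨b.map (LinearEquiv.ofLinear (b.constr ℤ f) (b.constr ℤ g) hfg hgf), ?_, ?_⟩ <;>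
        simp [Module.Basis.map_apply]
    rcases Int.even_or_odd a with ⟨k, hk⟩ | ⟨k, hk⟩
    · -- even case : orthogonal basis
      left
      have hmem : v - (k : ℝ) • l1 ∈ L := by
        have : ((b 1 - k • b 0 : L) : EuclideanSpace ℝ (Fin 2)) = v - (k : ℝ) • l1 := by
          rw [Submodule.coe_sub, Submodule.coe_smul, hb0, Int.cast_smul_eq_zsmul ℝ]
        rw [← this]; exact (b 1 - k • b 0 : L).2
      have hτl2 : τ (v - (k : ℝ) • l1) = -(v - (k : ℝ) • l1) := by
        rw [map_sub, map_smul, hfix, hτvE', hk]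
        push_cast
        module
      have horth : ⟪l1, v - (k : ℝ) • l1⟫ = (0 : ℝ) := by
        have := τ.inner_map_map l1 (v - (k : ℝ) • l1)
        rw [hfix, hτl2, inner_neg_right] at this
        linarith
      have hfg1 : (b.constr ℤ ![b 0, b 1 - k • b 0]).comp
          (b.constr ℤ ![b 0, k • b 0 + b 1]) = LinearMap.id := by
        apply b.ext
        intro i
        apply b.repr.injective
        ext j
        fin_cases i <;> fin_cases j <;>
          simp [map_add, map_sub, map_smul, Finsupp.single_apply, mul_add, mul_sub] <;> try ring
      have hgf1 : (b.constr ℤ ![b 0, k • b 0 + b 1]).comp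
          (b.constr ℤ ![b 0, b 1 - k • b 0]) = LinearMap.id := by
        apply b.ext
        intro i
        apply b.repr.injective
        ext j
        fin_cases i <;> fin_cases j <;>
          simp [map_add, map_sub, map_smul, Finsupp.single_apply, mul_add, mul_sub] <;> try ring
      obtain ⟨b', hb'0, hb'1⟩ := mkBasis ![b 0, b 1 - k • b 0] ![b 0, k • b 0 + b 1] hfg1 hgf1
      refine ⟨v - (k : ℝ) • l1, hmem, horth, b', ?_, ?_⟩
      · rw [hb'0]; simpa using hb0
      · rw [hb'1]
        show ((b 1 - k • b 0 : L) : EuclideanSpace ℝ (Fin 2)) = _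
        rw [Submodule.coe_sub, Submodule.coe_smul, hb0, Int.cast_smul_eq_zsmul ℝ]
    · -- odd case
      right
      refine ⟨hτ2, ?_⟩
      have hmem : v - (k : ℝ) • l1 ∈ L := by
        have : ((b 1 - k • b 0 : L) : EuclideanSpace ℝ (Fin 2)) = v - (k : ℝ) • l1 := by
          rw [Submodule.coe_sub, Submodule.coe_smul, hb0, Int.cast_smul_eq_zsmul ℝ]
        rw [← this]; exact (b 1 - k • b 0 : L).2
      have hτl2 : τ (v - (k : ℝ) • l1) = ((k : ℝ) + 1) • l1 - v := by
        rw [map_sub, map_smul, hfix, hτvE', hk]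
        push_cast
        module
      have hsum : l1 = (v - (k : ℝ) • l1) + τ (v - (k : ℝ) • l1) := by
        rw [hτl2]; module
      have hfg1 : (b.constr ℤ ![b 1 - k • b 0, (k + 1) • b 0 - b 1]).comp
          (b.constr ℤ ![b 0 + b 1, (k + 1) • b 0 + k • b 1]) = LinearMap.id := by
        apply b.ext
        intro i
        apply b.repr.injective
        ext j
        fin_cases i <;> fin_cases j <;>
          simp [map_add, map_sub, map_smul, Finsupp.single_apply, mul_add, mul_sub] <;> try ring
      have hgf1 : (b.constr ℤ ![b 0 + b 1, (k + 1) • b 0 + k • b 1]).comp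
          (b.constr ℤ ![b 1 - k • b 0, (k + 1) • b 0 - b 1]) = LinearMap.id := by
        apply b.ext
        intro i
        apply b.repr.injective
        ext j
        fin_cases i <;> fin_cases j <;>
          simp [map_add, map_sub, map_smul, Finsupp.single_apply, mul_add, mul_sub] <;> try ring
      obtain ⟨b', hb'0, hb'1⟩ :=
        mkBasis ![b 1 - k • b 0, (k + 1) • b 0 - b 1] ![b 0 + b 1, (k + 1) • b 0 + k • b 1]
          hfg1 hgf1
      refine ⟨v - (k : ℝ) • l1, hmem, hsum, b', ?_, ?_⟩
      · rw [hb'0]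
        show ((b 1 - k • b 0 : L) : EuclideanSpace ℝ (Fin 2)) = _
        rw [Submodule.coe_sub, Submodule.coe_smul, hb0, Int.cast_smul_eq_zsmul ℝ]
      · rw [hb'1, hτl2]
        show (((k + 1) • b 0 - b 1 : L) : EuclideanSpace ℝ (Fin 2)) = _
        rw [Submodule.coe_sub, Submodule.coe_smul, hb0,
          ← Int.cast_smul_eq_zsmul ℝ ((k + 1)) l1]
        push_cast
        module
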